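/- Let 1 ≤ n < s be integers and let b_1, …, b_s be distinct real numbers. Then there exist real numbers a_0, a_1, …, a_s such that for all real x, x^n = a_0 + Σ_{k=1}^s a_k · (x + b_k)^s. -/
import Mathlib

theorem stmt_13 (n s : ℕ) (h1 : 1 ≤ n) (h2 : n < s) (b : Fin s → ℝ)
    (hb : Function.Injective b) :
    ∃ (a0 : ℝ) (a : Fin s → ℝ), ∀ x : ℝ,
      x ^ n = a0 + ∑ k, a k * (x + b k) ^ s := by
  set M : Matrix (Fin s) (Fin s) ℝ := (Matrix.vandermonde b).transpose with hM
  have hdet : IsUnit M.det := by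
    rw [hM, Matrix.det_transpose, Matrix.det_vandermonde]
    refine isUnit_iff_ne_zero.mpr (Finset.prod_ne_zero_iff.mpr fun i _ =>
      Finset.prod_ne_zero_iff.mpr fun j hj => ?_)
    simp only [Finset.mem_Ioi] at hj
    exact sub_ne_zero.mpr fun h => absurd (hb h) (ne_of_gt hj)
  set t : Fin s → ℝ := fun m => if (m : ℕ) = s - n then ((s.choose n : ℝ))⁻¹ else 0 with ht
  set a : Fin s → ℝ := M⁻¹.mulVec t with ha
  have hMa : M.mulVec a = t := by
    rw [ha, Matrix.mulVec_mulVec, Matrix.mul_nonsing_inv _ hdet, Matrix.one_mulVec]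
  have hkey : ∀ m : ℕ, m < s →
      ∑ k, a k * b k ^ m = if m = s - n then ((s.choose n : ℝ))⁻¹ else 0 := by
    intro m hm
    have := congrFun hMa ⟨m, hm⟩
    simpa [hM, Matrix.mulVec, dotProduct, Matrix.vandermonde, ht, mul_comm] using this
  refine ⟨-∑ k, a k * b k ^ s, a, fun x => ?_⟩
  have h3 : ∑ k, a k * (x + b k) ^ s
      = ∑ j ∈ Finset.range (s + 1), (∑ k, a k * b k ^ (s - j)) * (x ^ j * (s.choose j : ℝ)) := by
    simp_rw [add_pow, Finset.mul_sum, Finset.sum_mul]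
    rw [Finset.sum_comm]
    exact Finset.sum_congr rfl fun j _ => Finset.sum_congr rfl fun k _ => by ring
  rw [h3, Finset.sum_range_succ']
  have h0 : (∑ k, a k * b k ^ (s - 0)) * (x ^ 0 * (s.choose 0 : ℝ)) = ∑ k, a k * b k ^ s := by
    simp
  rw [h0]
  have h4 : ∑ i ∈ Finset.range s, (∑ k, a k * b k ^ (s - (i + 1))) * (x ^ (i + 1) * (s.choose (i + 1) : ℝ))
      = x ^ n := by
    rw [Finset.sum_eq_single (n - 1)]
    · have hn1 : n - 1 + 1 = n := Nat.succ_pred_eq_of_pos h1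
      rw [hkey _ (by omega), if_pos (by omega), hn1]
      have hC : (s.choose n : ℝ) ≠ 0 := by
        exact_mod_cast (Nat.choose_pos h2.le).ne'
      field_simp
    · intro i hi hne
      rw [Finset.mem_range] at hi
      rw [hkey _ (by omega), if_neg (by omega), zero_mul]
    · intro h
      exact absurd (Finset.mem_range.mpr (by omega)) h
  rw [h4]
  ring
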